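/- Let q = K*·L* + T̄² with K*, L*, T̄ positive integers such that gcd(K*, T̄) = gcd(L*, T̄) = 1, let x be an integer coprime to q, and let y be an integer satisfying x·T̄ + y·K* ≡ 0 (mod q). Then gcd(y, q) = 1. -/

import Mathlib

theorem stmt2 (Ks Ls Tb : ℕ) (hKs : 0 < Ks) (hLs : 0 < Ls) (hTb : 0 < Tb)
    (h1 : Nat.Coprime Ks Tb) (h2 : Nat.Coprime Ls Tb)
    (q : ℕ) (hq : q = Ks * Ls + Tb ^ 2)
    (x y : ℤ) (hx : Int.gcd x q = 1)
    (hy : (q : ℤ) ∣ (x * Tb + y * Ks)) :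
    Int.gcd y q = 1 := by
  by_contra hne
  obtain ⟨p, hp, hpd⟩ := Nat.exists_prime_and_dvd hne
  have hpy : (p : ℤ) ∣ y := (Int.natCast_dvd_natCast.mpr hpd).trans (Int.gcd_dvd_left _ _)
  have hpq : p ∣ q := by
    have h := (Int.natCast_dvd_natCast.mpr hpd).trans (Int.gcd_dvd_right (a := y) (b := (q : ℤ)))
    exact_mod_cast h
  -- p ∣ x * Tb
  have hpxT : (p : ℤ) ∣ x * Tb := by
    have h := (Int.natCast_dvd_natCast.mpr hpq).trans hy
    have h2 : (p : ℤ) ∣ y * Ks := hpy.mul_right _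
    simpa using h.sub h2
  have hpx : ¬ (p : ℤ) ∣ x := by
    intro hdx
    have : (p : ℤ) ∣ Int.gcd x q := by exact_mod_cast Int.dvd_gcd hdx (Int.natCast_dvd_natCast.mpr hpq)
    rw [hx] at this
    exact hp.one_lt.ne' (by exact_mod_cast Int.eq_one_of_dvd_one (by positivity) this)
  have hpT : p ∣ Tb := by
    have := (Int.Prime.dvd_mul' (hp) hpxT).resolve_left hpx
    exact_mod_cast this
  have hpKL : p ∣ Ks * Ls := by
    have hT2 : p ∣ Tb ^ 2 := hpT.trans (dvd_pow_self Tb two_ne_zero)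
    exact (Nat.dvd_add_right hT2).mp (by rwa [hq, add_comm] at hpq)
  rcases hp.dvd_mul.mp hpKL with h | h
  · exact hp.one_lt.ne' (Nat.eq_one_of_dvd_coprimes h1 h hpT)
  · exact hp.one_lt.ne' (Nat.eq_one_of_dvd_coprimes h2 h hpT)
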